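/- Let δ > 0, ψ_a < ψ_b, φ₀ ∈ ℝ, and let q be of class C² on an open set containing the rectangle R = [φ₀, φ₀+δ]×[ψ_a,ψ_b], satisfying (⋆) on R, with q(φ₀,ψ) = c_* for every ψ ∈ [ψ_a,ψ_b] and c_* ≤ q < q_max on R. Then: (a) ∂q/∂φ(φ₀,ψ) = 0 for every ψ ∈ [ψ_a,ψ_b]; (b) with β(φ,ψ) = (−A'(q(φ,ψ))/B'(q(φ,ψ)))^{1/2} ≥ 0 on R, for every ψ̄ ∈ [ψ_a,ψ_b) the only continuous function Φ : [ψ̄,ψ_b] → [φ₀, φ₀+δ] with Φ(ψ̄) = φ₀ that is differentiable on (ψ̄,ψ_b] with Φ'(ψ) = β(Φ(ψ),ψ) is the constant function Φ ≡ φ₀. In particular, the positive and negative characteristics issuing from any point of the sonic segment {φ₀}×[ψ_a,ψ_b] coincide with the segment itself and never enter the supersonic region. -/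

import Mathlib

open Real Set MeasureTheory Filter

noncomputable section

/-- The density function `ρ(t) = (1 − ((γ−1)/2) t)^{1/(γ−1)}`. -/
def rhoF (γ t : ℝ) : ℝ := (1 - (γ - 1) / 2 * t) ^ ((1 : ℝ) / (γ - 1))

/-- The critical (sonic) speed `c_* = (2/(γ+1))^{1/2}`. -/
def cstar (γ : ℝ) : ℝ := Real.sqrt (2 / (γ + 1))

/-- The maximal speed `q_max = (2/(γ−1))^{1/2}`. -/
def qmaxF (γ : ℝ) : ℝ := Real.sqrt (2 / (γ - 1))

/-- `A(q) = ∫_{c_*}^q (ρ(s²)+2s²ρ'(s²))/(s ρ(s²)²) ds`. -/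
def Afun (γ q : ℝ) : ℝ :=
  ∫ s in (cstar γ)..q,
    (rhoF γ (s ^ 2) + 2 * s ^ 2 * deriv (rhoF γ) (s ^ 2)) / (s * (rhoF γ (s ^ 2)) ^ 2)

/-- `B(q) = ∫_{c_*}^q ρ(s²)/s ds`. -/
def Bfun (γ q : ℝ) : ℝ := ∫ s in (cstar γ)..q, rhoF γ (s ^ 2) / s

/-- Inverse of `A` restricted to `[c_*, q_max)`. -/
def AplusInv (γ : ℝ) : ℝ → ℝ := Function.invFunOn (Afun γ) (Ico (cstar γ) (qmaxF γ))

/-- `K(s) = B(A₊⁻¹(s))`. -/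
def Kfun (γ s : ℝ) : ℝ := Bfun γ (AplusInv γ s)

/-- `b(s) = −K'(s)`. -/
def bfun (γ s : ℝ) : ℝ := -deriv (Kfun γ) s

/-- `p(s) = −K''(s)`. -/
def pfun (γ s : ℝ) : ℝ := -deriv (deriv (Kfun γ)) s

/-- Partial derivative in the first (potential) variable. -/
def pdx (u : ℝ × ℝ → ℝ) (p : ℝ × ℝ) : ℝ := deriv (fun x => u (x, p.2)) p.1

/-- Partial derivative in the second (stream) variable. -/
def pdy (u : ℝ × ℝ → ℝ) (p : ℝ × ℝ) : ℝ := deriv (fun y => u (p.1, y)) p.2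

/-- The Chaplygin equation (⋆) at a point. -/
def chap (γ : ℝ) (q : ℝ × ℝ → ℝ) (p : ℝ × ℝ) : Prop :=
  pdx (pdx fun z => Afun γ (q z)) p + pdy (pdy fun z => Bfun γ (q z)) p = 0

/-! ### Auxiliary material for the proof of `stmt_14` -/

/-- Explicit closed form of `A'`. -/
def Ffun (γ s : ℝ) : ℝ :=
  (1 - (γ + 1) / 2 * s ^ 2) / (s * (1 - (γ - 1) / 2 * s ^ 2) ^ ((1 : ℝ) / (γ - 1) + 1))

/-- Explicit closed form of `B'`. -/
def Gfun (γ s : ℝ) : ℝ := rhoF γ (s ^ 2) / s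

namespace Stmt14Aux

variable {γ : ℝ}

lemma cstar_pos (hγ : 1 < γ) : 0 < cstar γ := Real.sqrt_pos.2 (by positivity)

lemma cstar_sq (hγ : 1 < γ) : cstar γ ^ 2 = 2 / (γ + 1) :=
  Real.sq_sqrt (by positivity)

lemma qmax_sq (hγ : 1 < γ) : qmaxF γ ^ 2 = 2 / (γ - 1) :=
  Real.sq_sqrt (le_of_lt (div_pos two_pos (by linarith)))

lemma cstar_lt_qmax (hγ : 1 < γ) : cstar γ < qmaxF γ := by
  apply Real.sqrt_lt_sqrt (by positivity)
  rw [div_lt_div_iff₀ (by linarith) (by linarith)]; nlinarith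

lemma cstar_mem (hγ : 1 < γ) : cstar γ ∈ Ioo 0 (qmaxF γ) :=
  ⟨cstar_pos hγ, cstar_lt_qmax hγ⟩

lemma base_pos (hγ : 1 < γ) {s : ℝ} (hs0 : 0 ≤ s) (hs : s < qmaxF γ) :
    0 < 1 - (γ - 1) / 2 * s ^ 2 := by
  have h1 : s ^ 2 < qmaxF γ ^ 2 := by nlinarith [Real.sqrt_nonneg (2/(γ-1))]
  rw [qmax_sq hγ] at h1
  have : (γ - 1) / 2 * s ^ 2 < (γ - 1) / 2 * (2 / (γ - 1)) := by
    apply mul_lt_mul_of_pos_left h1 (by linarith)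
  have h2 : (γ - 1) / 2 * (2 / (γ - 1)) = 1 := by
    rw [div_mul_div_comm]
    rw [div_eq_one_iff_eq (by nlinarith)]
    ring
  linarith

lemma rho_hasDeriv (hγ : 1 < γ) {t : ℝ} (ht : 0 < 1 - (γ - 1) / 2 * t) :
    HasDerivAt (rhoF γ)
      (-(1 / 2) * (1 - (γ - 1) / 2 * t) ^ ((1 : ℝ) / (γ - 1) - 1)) t := by
  have hlin : HasDerivAt (fun t : ℝ => 1 - (γ - 1) / 2 * t) (-((γ - 1) / 2)) t := by
    simpa using ((hasDerivAt_id t).const_mul ((γ - 1) / 2)).const_sub 1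
  have h := (Real.hasDerivAt_rpow_const (p := (1 : ℝ) / (γ - 1))
      (Or.inl (ne_of_gt ht))).comp t hlin
  have key : (1 : ℝ) / (γ - 1) * (1 - (γ - 1) / 2 * t) ^ ((1 : ℝ) / (γ - 1) - 1) * (-((γ - 1) / 2))
      = -(1 / 2) * (1 - (γ - 1) / 2 * t) ^ ((1 : ℝ) / (γ - 1) - 1) := by
    have hne : γ - 1 ≠ 0 := by linarith
    field_simp
  rw [← key]
  exact h

lemma Acore_eq (hγ : 1 < γ) {s : ℝ} (hs : s ∈ Ioo 0 (qmaxF γ)) :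
    (rhoF γ (s ^ 2) + 2 * s ^ 2 * deriv (rhoF γ) (s ^ 2)) / (s * (rhoF γ (s ^ 2)) ^ 2)
      = Ffun γ s := by
  have hx : 0 < 1 - (γ - 1) / 2 * s ^ 2 := base_pos hγ hs.1.le hs.2
  have hd : deriv (rhoF γ) (s ^ 2)
      = -(1 / 2) * (1 - (γ - 1) / 2 * s ^ 2) ^ ((1 : ℝ) / (γ - 1) - 1) :=
    (rho_hasDeriv hγ hx).deriv
  set x := 1 - (γ - 1) / 2 * s ^ 2 with hxdef
  set e := (1 : ℝ) / (γ - 1) with hedef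
  have hrho : rhoF γ (s ^ 2) = x ^ e := rfl
  have hX : x ^ e = x ^ (e - 1) * x := by
    rw [← Real.rpow_add_one (ne_of_gt hx) (e - 1)]; ring_nf
  have hX2 : x ^ (e + 1) = x ^ (e - 1) * x * x := by
    rw [show e + 1 = (e - 1) + 1 + 1 by ring, Real.rpow_add_one (ne_of_gt hx),
      Real.rpow_add_one (ne_of_gt hx)]
  set X := x ^ (e - 1) with hXdef
  rw [Ffun, hrho, hd, ← hedef, ← hxdef, hX2, hX]
  have hs0 : 0 < s := hs.1
  have hX0 : 0 < X := Real.rpow_pos_of_pos hx _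
  rw [div_eq_div_iff (by positivity) (by positivity)]
  have hbx : x = 1 - (γ - 1) / 2 * s ^ 2 := hxdef
  linear_combination (s * X ^ 2 * x * (s^2)) * hbx

lemma rpow_contAt (hγ : 1 < γ) {s : ℝ} (p : ℝ) (hs0 : 0 ≤ s) (hs : s < qmaxF γ) :
    ContinuousAt (fun u : ℝ => (1 - (γ - 1) / 2 * u ^ 2) ^ p) s := by
  have hx := base_pos hγ hs0 hs
  have hinner : ContinuousAt (fun u : ℝ => 1 - (γ - 1) / 2 * u ^ 2) s := by fun_prop
  exact hinner.rpow_const (Or.inl (ne_of_gt hx))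

lemma Fcont (hγ : 1 < γ) : ContinuousOn (Ffun γ) (Ioo 0 (qmaxF γ)) := by
  intro s hs
  apply ContinuousWithinAt.mono _ (subset_univ _)
  rw [continuousWithinAt_univ]
  have hx := base_pos hγ hs.1.le hs.2
  apply ContinuousAt.div (by fun_prop)
    (ContinuousAt.mul (by fun_prop) (rpow_contAt hγ _ hs.1.le hs.2))
  exact ne_of_gt (mul_pos hs.1 (Real.rpow_pos_of_pos hx ((1 : ℝ) / (γ - 1) + 1)))

lemma Gcont (hγ : 1 < γ) : ContinuousOn (Gfun γ) (Ioo 0 (qmaxF γ)) := by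
  intro s hs
  apply ContinuousWithinAt.mono _ (subset_univ _)
  rw [continuousWithinAt_univ]
  exact ContinuousAt.div (rpow_contAt hγ _ hs.1.le hs.2) (by fun_prop) (ne_of_gt hs.1)

lemma AF_deriv (hγ : 1 < γ) {x : ℝ} (hx : x ∈ Ioo 0 (qmaxF γ)) :
    HasDerivAt (fun y => ∫ s in (cstar γ)..y, Ffun γ s) (Ffun γ x) x := by
  have hsub : uIcc (cstar γ) x ⊆ Ioo 0 (qmaxF γ) :=
    (ordConnected_Ioo).uIcc_subset (cstar_mem hγ) hx
  exact intervalIntegral.integral_hasDerivAt_right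
    (((Fcont hγ).mono hsub).intervalIntegrable)
    ((Fcont hγ).stronglyMeasurableAtFilter isOpen_Ioo x hx)
    (((Fcont hγ) x hx).continuousAt (isOpen_Ioo.mem_nhds hx))

lemma Afun_hasDeriv (hγ : 1 < γ) {x : ℝ} (hx : x ∈ Ioo 0 (qmaxF γ)) :
    HasDerivAt (Afun γ) (Ffun γ x) x := by
  apply (AF_deriv hγ hx).congr_of_eventuallyEq
  filter_upwards [isOpen_Ioo.mem_nhds hx] with y hy
  apply intervalIntegral.integral_congr
  intro s hsI
  exact Acore_eq hγ ((ordConnected_Ioo).uIcc_subset (cstar_mem hγ) hy hsI)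

lemma Bfun_hasDeriv (hγ : 1 < γ) {x : ℝ} (hx : x ∈ Ioo 0 (qmaxF γ)) :
    HasDerivAt (Bfun γ) (Gfun γ x) x := by
  have hsub : uIcc (cstar γ) x ⊆ Ioo 0 (qmaxF γ) :=
    (ordConnected_Ioo).uIcc_subset (cstar_mem hγ) hx
  exact intervalIntegral.integral_hasDerivAt_right
    (((Gcont hγ).mono hsub).intervalIntegrable)
    ((Gcont hγ).stronglyMeasurableAtFilter isOpen_Ioo x hx)
    (((Gcont hγ) x hx).continuousAt (isOpen_Ioo.mem_nhds hx))

lemma cstar_num (hγ : 1 < γ) : 1 - (γ + 1) / 2 * cstar γ ^ 2 = 0 := by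
  rw [cstar_sq hγ]
  field_simp
  norm_num

lemma Ffun_cstar (hγ : 1 < γ) : Ffun γ (cstar γ) = 0 := by
  rw [Ffun, cstar_num hγ, zero_div]

lemma den_hasDeriv (hγ : 1 < γ) {s : ℝ} (hs : s ∈ Ioo 0 (qmaxF γ)) :
    HasDerivAt (fun u : ℝ => u * (1 - (γ - 1) / 2 * u ^ 2) ^ ((1 : ℝ) / (γ - 1) + 1))
      ((1 - (γ - 1) / 2 * s ^ 2) ^ ((1 : ℝ) / (γ - 1) + 1)
        + s * (((1 : ℝ) / (γ - 1) + 1) * (1 - (γ - 1) / 2 * s ^ 2) ^ ((1 : ℝ) / (γ - 1))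
            * (-((γ - 1) * s)))) s := by
  have hx := base_pos hγ hs.1.le hs.2
  have hlin : HasDerivAt (fun u : ℝ => 1 - (γ - 1) / 2 * u ^ 2) (-((γ - 1) * s)) s := by
    have h1 : HasDerivAt (fun u : ℝ => u ^ 2) (2 * s) s := by
      simpa using (hasDerivAt_pow 2 s)
    have := (h1.const_mul ((γ - 1) / 2)).const_sub 1
    exact this.congr_deriv (by ring)
  have hrpow := (Real.hasDerivAt_rpow_const (p := (1 : ℝ) / (γ - 1) + 1)
      (Or.inl (ne_of_gt hx))).comp s hlin
  have h := (hasDerivAt_id s).mul hrpow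
  simp only [Function.comp, id] at h
  rw [show (1 : ℝ) / (γ - 1) + 1 - 1 = (1 : ℝ) / (γ - 1) from by ring] at h
  exact h.congr_deriv (by ring)

lemma Ffun_hasDeriv_cstar (hγ : 1 < γ) :
    ∃ Fd : ℝ, HasDerivAt (Ffun γ) Fd (cstar γ) ∧ Fd < 0 := by
  have hs := cstar_mem hγ
  have hx := base_pos hγ hs.1.le hs.2
  have hden_pos : 0 < cstar γ * (1 - (γ - 1) / 2 * cstar γ ^ 2) ^ ((1 : ℝ) / (γ - 1) + 1) :=
    mul_pos hs.1 (Real.rpow_pos_of_pos hx _)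
  have hnum : HasDerivAt (fun u : ℝ => 1 - (γ + 1) / 2 * u ^ 2)
      (-((γ + 1) * cstar γ)) (cstar γ) := by
    have h1 : HasDerivAt (fun u : ℝ => u ^ 2) (2 * cstar γ) (cstar γ) := by
      simpa using (hasDerivAt_pow 2 (cstar γ))
    have := (h1.const_mul ((γ + 1) / 2)).const_sub 1
    exact this.congr_deriv (by ring)
  have hden := den_hasDeriv hγ hs
  have hdiv := hnum.div hden (ne_of_gt hden_pos)
  refine ⟨_, hdiv, ?_⟩
  rw [cstar_num hγ]
  rw [show ∀ a b c : ℝ, (a * b - 0 * c) / b ^ 2 = a * b / b ^ 2 by intros; ring]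
  apply div_neg_of_neg_of_pos
  · apply mul_neg_of_neg_of_pos _ hden_pos
    have : 0 < (γ + 1) * cstar γ := mul_pos (by linarith) hs.1
    linarith
  · positivity

lemma xQ_le_xs (hγ : 1 < γ) {Q s : ℝ} (hsQ : s ≤ Q) (hs0 : 0 ≤ s) :
    1 - (γ - 1) / 2 * Q ^ 2 ≤ 1 - (γ - 1) / 2 * s ^ 2 := by
  have : s ^ 2 ≤ Q ^ 2 := by nlinarith
  nlinarith

lemma negF_bound (hγ : 1 < γ) {Q s : ℝ} (hQ : Q < qmaxF γ) (hs : s ∈ Icc (cstar γ) Q) :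
    0 ≤ -Ffun γ s ∧
    -Ffun γ s ≤ ((γ + 1) * Q) /
      (cstar γ * (1 - (γ - 1) / 2 * Q ^ 2) ^ ((1 : ℝ) / (γ - 1) + 1)) * (s - cstar γ) := by
  have hc := cstar_mem hγ
  have hc0 : 0 < cstar γ := hc.1
  have hs0 : 0 < s := lt_of_lt_of_le hc0 hs.1
  have hsq : s < qmaxF γ := lt_of_le_of_lt hs.2 hQ
  have hQ0 : 0 < Q := lt_of_lt_of_le hs0 hs.2
  have hxs := base_pos hγ hs0.le hsq
  have hxQ := base_pos hγ hQ0.le hQ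
  have hxQs := xQ_le_xs hγ hs.2 hs0.le
  set p := (1 : ℝ) / (γ - 1) + 1 with hp
  have hp0 : 0 < p := by
    rw [hp]
    have : 0 < (1:ℝ)/(γ-1) := div_pos one_pos (by linarith)
    linarith
  have hpowle : (1 - (γ - 1) / 2 * Q ^ 2) ^ p ≤ (1 - (γ - 1) / 2 * s ^ 2) ^ p :=
    Real.rpow_le_rpow hxQ.le hxQs hp0.le
  have hpowQ : 0 < (1 - (γ - 1) / 2 * Q ^ 2) ^ p := Real.rpow_pos_of_pos hxQ _
  have hpows : 0 < (1 - (γ - 1) / 2 * s ^ 2) ^ p := Real.rpow_pos_of_pos hxs _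
  have hnum : (γ + 1) / 2 * s ^ 2 - 1 = (γ + 1) / 2 * (s + cstar γ) * (s - cstar γ) := by
    have := cstar_num hγ
    nlinarith [this]
  have h1 : 0 ≤ s - cstar γ := by linarith [hs.1]
  have h2 : 0 ≤ (γ + 1) / 2 * (s + cstar γ) := by
    apply mul_nonneg (by linarith)
    linarith
  have hnum0 : 0 ≤ (γ + 1) / 2 * s ^ 2 - 1 := by
    rw [hnum]
    exact mul_nonneg h2 h1
  have hFneg : -Ffun γ s
      = ((γ + 1) / 2 * s ^ 2 - 1) / (s * (1 - (γ - 1) / 2 * s ^ 2) ^ p) := by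
    rw [Ffun, ← hp, ← neg_div]
    congr 1
    ring
  constructor
  · rw [hFneg]
    exact div_nonneg hnum0 (by positivity)
  · rw [hFneg]
    conv_rhs => rw [div_mul_eq_mul_div]
    apply div_le_div₀ (mul_nonneg (mul_nonneg (by linarith) hQ0.le) h1)
    · rw [hnum]
      have h2' : (γ + 1) / 2 * (s + cstar γ) ≤ (γ + 1) * Q := by nlinarith [hs.2]
      exact mul_le_mul_of_nonneg_right h2' h1
    · exact mul_pos hc0 hpowQ
    · exact mul_le_mul (hs.1) hpowle hpowQ.le hs0.le

lemma G_bound (hγ : 1 < γ) {Q s : ℝ} (hQ : Q < qmaxF γ) (hs : s ∈ Icc (cstar γ) Q) :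
    (1 - (γ - 1) / 2 * Q ^ 2) ^ ((1 : ℝ) / (γ - 1)) / Q ≤ Gfun γ s ∧
    0 < (1 - (γ - 1) / 2 * Q ^ 2) ^ ((1 : ℝ) / (γ - 1)) / Q := by
  have hc := cstar_mem hγ
  have hs0 : 0 < s := lt_of_lt_of_le hc.1 hs.1
  have hsq : s < qmaxF γ := lt_of_le_of_lt hs.2 hQ
  have hQ0 : 0 < Q := lt_of_lt_of_le hs0 hs.2
  have hxs := base_pos hγ hs0.le hsq
  have hxQ := base_pos hγ hQ0.le hQ
  have hxQs := xQ_le_xs hγ hs.2 hs0.le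
  have he0 : (0:ℝ) ≤ 1 / (γ - 1) := div_nonneg zero_le_one (by linarith)
  have hpowle : (1 - (γ - 1) / 2 * Q ^ 2) ^ ((1:ℝ) / (γ - 1))
      ≤ (1 - (γ - 1) / 2 * s ^ 2) ^ ((1:ℝ) / (γ - 1)) :=
    Real.rpow_le_rpow hxQ.le hxQs he0
  refine ⟨?_, div_pos (Real.rpow_pos_of_pos hxQ _) hQ0⟩
  rw [Gfun, rhoF]
  exact div_le_div₀ (Real.rpow_pos_of_pos hxs _).le hpowle hs0 hs.2

end Stmt14Aux

open Stmt14Aux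

/-- on a vertical sonic segment all characteristics from the sonic
points coincide with the segment itself (Lemma `nov-lemma000`). -/
theorem stmt_14 (γ : ℝ) (hγ : 1 < γ)
    (δ : ℝ) (hδ : 0 < δ) (ψa ψb φ0 : ℝ) (hab : ψa < ψb)
    (V : Set (ℝ × ℝ)) (hV : IsOpen V)
    (hRV : Icc φ0 (φ0 + δ) ×ˢ Icc ψa ψb ⊆ V)
    (q : ℝ × ℝ → ℝ) (hq : ContDiffOn ℝ 2 q V)
    (hPDE : ∀ p ∈ Icc φ0 (φ0 + δ) ×ˢ Icc ψa ψb, chap γ q p)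
    (hson : ∀ ψ ∈ Icc ψa ψb, q (φ0, ψ) = cstar γ)
    (hrange : ∀ p ∈ Icc φ0 (φ0 + δ) ×ˢ Icc ψa ψb, cstar γ ≤ q p ∧ q p < qmaxF γ) :
    -- (a) the sonic segment consists of exceptional-type points: q_φ = 0 on it
    (∀ ψ ∈ Icc ψa ψb, pdx q (φ0, ψ) = 0) ∧
    -- (b) the unique characteristic issuing from a sonic point is the segment itself
    (∀ ψ' ∈ Ico ψa ψb, ∀ Φ : ℝ → ℝ,
      ContinuousOn Φ (Icc ψ' ψb) →
      (∀ ψ ∈ Icc ψ' ψb, Φ ψ ∈ Icc φ0 (φ0 + δ)) →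
      Φ ψ' = φ0 →
      (∀ ψ ∈ Ioc ψ' ψb, HasDerivWithinAt Φ
        (Real.sqrt (-(deriv (Afun γ) (q (Φ ψ, ψ))) / deriv (Bfun γ) (q (Φ ψ, ψ))))
        (Icc ψ' ψb) ψ) →
      ∀ ψ ∈ Icc ψ' ψb, Φ ψ = φ0) := by
  set S : Set (ℝ × ℝ) := Icc φ0 (φ0 + δ) ×ˢ Icc ψa ψb with hSdef
  -- derivative infrastructure
  have hq1 : ContDiffOn ℝ 1 (fderiv ℝ q) V := hq.fderiv_of_isOpen hV (by norm_num)
  set D1 : ℝ × ℝ → ℝ := fun p => fderiv ℝ q p (1, 0) with hD1def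
  have hD1cd : ContDiffOn ℝ 1 D1 V :=
    (ContinuousLinearMap.apply ℝ ℝ ((1:ℝ), (0:ℝ))).contDiff.comp_contDiffOn hq1
  set D2 : ℝ × ℝ → ℝ := fun p => fderiv ℝ D1 p (1, 0) with hD2def
  have hD2cont : ContinuousOn D2 V :=
    (ContinuousLinearMap.apply ℝ ℝ ((1:ℝ), (0:ℝ))).continuous.comp_continuousOn
      (hD1cd.continuousOn_fderiv_of_isOpen hV le_rfl)
  have hline : ∀ ψ x : ℝ, HasDerivAt (fun x' : ℝ => ((x' : ℝ), ψ)) ((1:ℝ), (0:ℝ)) x :=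
    fun ψ x => HasDerivAt.prodMk (hasDerivAt_id x) (hasDerivAt_const x ψ)
  have hqx : ∀ p ∈ V, HasDerivAt (fun x => q (x, p.2)) (D1 p) p.1 := by
    intro p hp
    have hdq : DifferentiableAt ℝ q p :=
      (hq.differentiableOn (by norm_num)).differentiableAt (hV.mem_nhds hp)
    have h := hdq.hasFDerivAt.comp_hasDerivAt p.1 (hline p.2 p.1)
    exact h
  have hD1x : ∀ p ∈ V, HasDerivAt (fun x => D1 (x, p.2)) (D2 p) p.1 := by
    intro p hp
    have hdq : DifferentiableAt ℝ D1 p :=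
      (hD1cd.differentiableOn one_ne_zero).differentiableAt (hV.mem_nhds hp)
    exact hdq.hasFDerivAt.comp_hasDerivAt p.1 (hline p.2 p.1)
  have hmemS : ∀ ψ ∈ Icc ψa ψb, (φ0, ψ) ∈ S :=
    fun ψ hψ => ⟨⟨le_rfl, by linarith⟩, hψ⟩
  obtain ⟨Fd, hFd, hFdneg⟩ := Ffun_hasDeriv_cstar hγ
  -- part (a) at interior points
  have keyInt : ∀ ψ ∈ Ioo ψa ψb, D1 (φ0, ψ) = 0 := by
    intro ψ hψ
    have hψI : ψ ∈ Icc ψa ψb := Ioo_subset_Icc_self hψ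
    have hpS : (φ0, ψ) ∈ S := hmemS ψ hψI
    have hpV : (φ0, ψ) ∈ V := hRV hpS
    have hq0 : q (φ0, ψ) = cstar γ := hson ψ hψI
    have hBside : pdy (pdy fun z => Bfun γ (q z)) (φ0, ψ) = 0 := by
      have hz : ∀ y ∈ Ioo ψa ψb, deriv (fun y' => Bfun γ (q (φ0, y'))) y = 0 := by
        intro y hy
        have hev : (fun y' => Bfun γ (q (φ0, y'))) =ᶠ[nhds y]
            fun _ => Bfun γ (cstar γ) := by
          filter_upwards [isOpen_Ioo.mem_nhds hy] with y' hy'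
          rw [hson y' (Ioo_subset_Icc_self hy')]
        rw [hev.deriv_eq, deriv_const]
      show deriv (fun y => pdy (fun z => Bfun γ (q z)) (φ0, y)) ψ = 0
      have hev2 : (fun y => pdy (fun z => Bfun γ (q z)) (φ0, y)) =ᶠ[nhds ψ]
          fun _ => (0:ℝ) := by
        filter_upwards [isOpen_Ioo.mem_nhds hψ] with y hy
        exact hz y hy
      rw [hev2.deriv_eq, deriv_const]
    have hqcont0 : ContinuousAt (fun x => q (x, ψ)) φ0 := (hqx _ hpV).continuousAt
    have hev : ∀ᶠ x in nhds φ0, (x, ψ) ∈ V ∧ q (x, ψ) ∈ Ioo 0 (qmaxF γ) := by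
      have h1 : ∀ᶠ x in nhds φ0, (x, ψ) ∈ V :=
        (continuous_id.prodMk continuous_const).continuousAt.preimage_mem_nhds
          (hV.mem_nhds hpV)
      have h2 : ∀ᶠ x in nhds φ0, q (x, ψ) ∈ Ioo 0 (qmaxF γ) := by
        apply hqcont0.preimage_mem_nhds
        rw [hq0]
        exact isOpen_Ioo.mem_nhds (cstar_mem hγ)
      exact h1.and h2
    have hAside : pdx (pdx fun z => Afun γ (q z)) (φ0, ψ) = Fd * (D1 (φ0, ψ)) ^ 2 := by
      show deriv (fun x => deriv (fun x' => Afun γ (q (x', ψ))) x) φ0 = _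
      have hderiv_eq : (fun x => deriv (fun x' => Afun γ (q (x', ψ))) x)
          =ᶠ[nhds φ0] fun x => Ffun γ (q (x, ψ)) * D1 (x, ψ) := by
        filter_upwards [hev] with x hx
        exact ((Afun_hasDeriv hγ hx.2).comp x (hqx (x, ψ) hx.1)).deriv
      rw [hderiv_eq.deriv_eq]
      have h1 : HasDerivAt (fun x => Ffun γ (q (x, ψ))) (Fd * D1 (φ0, ψ)) φ0 := by
        have hF := hFd
        rw [← hq0] at hF
        exact hF.comp φ0 (hqx (φ0, ψ) hpV)
      have h2 := hD1x (φ0, ψ) hpV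
      rw [HasDerivAt.deriv (f := fun x => Ffun γ (q (x, ψ)) * D1 (x, ψ)) (h1.mul h2), hq0, Ffun_cstar hγ]
      ring
    have hpde := hPDE (φ0, ψ) hpS
    unfold chap at hpde
    rw [hAside, hBside] at hpde
    have hD1sq : (D1 (φ0, ψ)) ^ 2 = 0 := by
      rcases mul_eq_zero.1 (show Fd * (D1 (φ0, ψ)) ^ 2 = 0 by linarith) with h | h
      · exact absurd h (ne_of_lt hFdneg)
      · exact h
    exact pow_eq_zero_iff (two_ne_zero) |>.1 hD1sq
  -- part (a) everywhere by continuity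
  have keyAll : ∀ ψ ∈ Icc ψa ψb, D1 (φ0, ψ) = 0 := by
    intro ψ hψ
    have hpV : (φ0, ψ) ∈ V := hRV (hmemS ψ hψ)
    have hcontψ : ContinuousAt (fun y => D1 (φ0, y)) ψ := by
      have hD1c : ContinuousAt D1 (φ0, ψ) :=
        (hD1cd.continuousOn (φ0, ψ) hpV).continuousAt (hV.mem_nhds hpV)
      exact hD1c.comp ((continuous_const.prodMk continuous_id).continuousAt)
    haveI hne : (nhdsWithin ψ (Ioo ψa ψb)).NeBot := by
      rw [← mem_closure_iff_nhdsWithin_neBot, closure_Ioo (ne_of_lt hab)]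
      exact hψ
    have ht1 : Tendsto (fun y => D1 (φ0, y)) (nhdsWithin ψ (Ioo ψa ψb))
        (nhds (D1 (φ0, ψ))) :=
      (hcontψ.continuousWithinAt).tendsto
    have ht2 : Tendsto (fun y => D1 (φ0, y)) (nhdsWithin ψ (Ioo ψa ψb)) (nhds 0) := by
      apply Tendsto.congr' _ tendsto_const_nhds
      filter_upwards [self_mem_nhdsWithin] with y hy
      exact (keyInt y hy).symm
    exact tendsto_nhds_unique ht1 ht2
  have parta : ∀ ψ ∈ Icc ψa ψb, pdx q (φ0, ψ) = 0 := by
    intro ψ hψ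
    have := (hqx (φ0, ψ) (hRV (hmemS ψ hψ))).deriv
    exact this.trans (keyAll ψ hψ)
  refine ⟨parta, ?_⟩
  -- part (b)
  intro ψ' hψ' Φ hΦc hΦr hΦ0 hΦd
  have hScomp : IsCompact S := isCompact_Icc.prod isCompact_Icc
  have hSne : S.Nonempty := ⟨(φ0, ψa), hmemS ψa ⟨le_rfl, hab.le⟩⟩
  obtain ⟨p0, hp0S, hp0max⟩ := hScomp.exists_isMaxOn hSne ((hq.continuousOn).mono hRV)
  set Qm := q p0 with hQmdef
  have hQlt : Qm < qmaxF γ := (hrange p0 hp0S).2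
  have hQge : cstar γ ≤ Qm := (hrange p0 hp0S).1
  have hQ0 : 0 < Qm := lt_of_lt_of_le (cstar_pos hγ) hQge
  obtain ⟨M0, hM0⟩ := hScomp.exists_bound_of_continuousOn (hD2cont.mono hRV)
  set M := max M0 0 with hMdef
  have hMnn : (0:ℝ) ≤ M := le_max_right _ _
  have hM' : ∀ p ∈ S, |D2 p| ≤ M := fun p hp =>
    le_trans (by simpa using hM0 p hp) (le_max_left _ _)
  have hq_in : ∀ p ∈ S, q p ∈ Icc (cstar γ) Qm := fun p hp => ⟨(hrange p hp).1, hp0max hp⟩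
  -- first-order Taylor bound on D1
  have hD1bound : ∀ ψ ∈ Icc ψa ψb, ∀ x ∈ Icc φ0 (φ0 + δ), |D1 (x, ψ)| ≤ M * (x - φ0) := by
    intro ψ hψ x hx
    have hdiff : DifferentiableOn ℝ (fun x' => D1 (x', ψ)) (Icc φ0 (φ0 + δ)) := by
      intro y hy
      exact (hD1x (y, ψ) (hRV ⟨hy, hψ⟩)).differentiableAt.differentiableWithinAt
    have hbound : ∀ y ∈ Ico φ0 (φ0 + δ),
        ‖derivWithin (fun x' => D1 (x', ψ)) (Icc φ0 (φ0 + δ)) y‖ ≤ M := by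
      intro y hy
      have hder := (hD1x (y, ψ) (hRV ⟨Ico_subset_Icc_self hy, hψ⟩)).hasDerivWithinAt
        (s := Icc φ0 (φ0 + δ))
      rw [hder.derivWithin ((uniqueDiffOn_Icc (by linarith)) y (Ico_subset_Icc_self hy))]
      simpa using hM' (y, ψ) ⟨Ico_subset_Icc_self hy, hψ⟩
    have := norm_image_sub_le_of_norm_deriv_le_segment hdiff hbound x hx
    rw [keyAll ψ hψ] at this
    simpa using this
  -- second-order Taylor bound on q
  have htaylor : ∀ p ∈ S, q p ≤ cstar γ + M / 2 * (p.1 - φ0) ^ 2 := by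
    rintro ⟨x, ψ⟩ ⟨hx, hψ⟩
    have hderiv : ∀ y ∈ Icc φ0 (φ0 + δ),
        HasDerivAt (fun x' => q (x', ψ) - (cstar γ + M / 2 * (x' - φ0) ^ 2))
          (D1 (y, ψ) - M * (y - φ0)) y := by
      intro y hy
      have h1 := hqx (y, ψ) (hRV ⟨hy, hψ⟩)
      have h2 : HasDerivAt (fun x' : ℝ => cstar γ + M / 2 * (x' - φ0) ^ 2)
          (M * (y - φ0)) y := by
        have h3 : HasDerivAt (fun x' : ℝ => (x' - φ0) ^ 2) (2 * (y - φ0)) y := by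
          exact (((hasDerivAt_id y).sub_const φ0).pow 2).congr_deriv (by simp)
        have := (h3.const_mul (M / 2)).const_add (cstar γ)
        exact this.congr_deriv (by ring)
      exact h1.sub h2
    have hanti : AntitoneOn (fun x' => q (x', ψ) - (cstar γ + M / 2 * (x' - φ0) ^ 2))
        (Icc φ0 (φ0 + δ)) := by
      apply antitoneOn_of_deriv_nonpos (convex_Icc _ _)
      · intro y hy
        exact (hderiv y hy).continuousAt.continuousWithinAt
      · intro y hy
        rw [interior_Icc] at hy
        exact (hderiv y (Ioo_subset_Icc_self hy)).differentiableAt.differentiableWithinAt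
      · intro y hy
        rw [interior_Icc] at hy
        rw [(hderiv y (Ioo_subset_Icc_self hy)).deriv]
        have hb := (abs_le.1 (hD1bound ψ hψ y (Ioo_subset_Icc_self hy))).2
        linarith
    have hφ0m : φ0 ∈ Icc φ0 (φ0 + δ) := left_mem_Icc.2 (by linarith)
    have := hanti hφ0m hx hx.1
    have hq0 : q (φ0, ψ) = cstar γ := hson ψ hψ
    simp only [hq0, sub_self, sub_zero] at this
    have hval : cstar γ - (cstar γ + M / 2 * (φ0 - φ0) ^ 2) = 0 := by ring
    simp only [hval] at this ⊢
    linarith [this]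
  -- bound on the characteristic slope
  set L := ((γ + 1) * Qm) /
      (cstar γ * (1 - (γ - 1) / 2 * Qm ^ 2) ^ ((1 : ℝ) / (γ - 1) + 1)) with hLdef
  set gg := (1 - (γ - 1) / 2 * Qm ^ 2) ^ ((1 : ℝ) / (γ - 1)) / Qm with hggdef
  have hggpos : 0 < gg := (G_bound hγ hQlt ⟨le_refl _, hQge⟩).2
  have hL0 : 0 ≤ L := by
    apply div_nonneg (mul_nonneg (by linarith) hQ0.le)
    exact (mul_pos (cstar_pos hγ)
      (Real.rpow_pos_of_pos (base_pos hγ hQ0.le hQlt) _)).le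
  set C := Real.sqrt (L / gg * (M / 2)) with hCdef
  have hCnn : 0 ≤ C := Real.sqrt_nonneg _
  have hbeta : ∀ p ∈ S,
      Real.sqrt (-(deriv (Afun γ) (q p)) / deriv (Bfun γ) (q p)) ≤ C * (p.1 - φ0) := by
    intro p hp
    have hqp := hq_in p hp
    have hqU : q p ∈ Ioo 0 (qmaxF γ) :=
      ⟨lt_of_lt_of_le (cstar_pos hγ) hqp.1, lt_of_le_of_lt hqp.2 hQlt⟩
    rw [(Afun_hasDeriv hγ hqU).deriv, (Bfun_hasDeriv hγ hqU).deriv]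
    obtain ⟨hF0, hFle⟩ := negF_bound hγ hQlt hqp
    obtain ⟨hGge, _⟩ := G_bound hγ hQlt hqp
    have hGpos' : 0 < Gfun γ (q p) := lt_of_lt_of_le hggpos hGge
    rw [← hLdef] at hFle
    rw [← hggdef] at hGge
    have step1 : -Ffun γ (q p) / Gfun γ (q p) ≤ L / gg * (q p - cstar γ) := by
      calc -Ffun γ (q p) / Gfun γ (q p) ≤ -Ffun γ (q p) / gg :=
            div_le_div_of_nonneg_left hF0 hggpos hGge
        _ ≤ L * (q p - cstar γ) / gg := (div_le_div_iff_of_pos_right hggpos).2 hFle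
        _ = L / gg * (q p - cstar γ) := by ring
    have step2 : q p - cstar γ ≤ M / 2 * (p.1 - φ0) ^ 2 := by
      have := htaylor p hp; linarith
    have hLgg : (0:ℝ) ≤ L / gg := div_nonneg hL0 hggpos.le
    have step3 : -Ffun γ (q p) / Gfun γ (q p) ≤ L / gg * (M / 2) * (p.1 - φ0) ^ 2 := by
      calc -Ffun γ (q p) / Gfun γ (q p) ≤ L / gg * (q p - cstar γ) := step1
        _ ≤ L / gg * (M / 2 * (p.1 - φ0) ^ 2) := mul_le_mul_of_nonneg_left step2 hLgg
        _ = L / gg * (M / 2) * (p.1 - φ0) ^ 2 := by ring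
    have hx0 : (0:ℝ) ≤ p.1 - φ0 := by have := hp.1.1; linarith
    have hnn : (0:ℝ) ≤ L / gg * (M / 2) := mul_nonneg hLgg (by linarith)
    calc Real.sqrt (-Ffun γ (q p) / Gfun γ (q p))
        ≤ Real.sqrt (L / gg * (M / 2) * (p.1 - φ0) ^ 2) := Real.sqrt_le_sqrt step3
      _ = C * (p.1 - φ0) := by
          rw [Real.sqrt_mul hnn, Real.sqrt_sq hx0, hCdef]
  -- Gronwall estimate
  have main : ∀ a ∈ Ioo ψ' ψb, ∀ ψ ∈ Icc a ψb,
      Φ ψ - φ0 ≤ (Φ a - φ0) * Real.exp (C * (ψ - a)) := by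
    intro a ha ψ hψ
    have haI : a ∈ Icc ψ' ψb := ⟨ha.1.le, ha.2.le⟩
    have hΦa : φ0 ≤ Φ a := (hΦr a haI).1
    have hga := norm_le_gronwallBound_of_norm_deriv_right_le
      (f := fun t => Φ t - φ0)
      (f' := fun t => Real.sqrt
        (-(deriv (Afun γ) (q (Φ t, t))) / deriv (Bfun γ) (q (Φ t, t))))
      (δ := Φ a - φ0) (K := C) (ε := 0) (a := a) (b := ψb)
      ((hΦc.mono (Icc_subset_Icc haI.1 le_rfl)).sub continuousOn_const)
      ?_ (le_of_eq (Real.norm_of_nonneg (by show (0:ℝ) ≤ Φ a - φ0; linarith))) ?_ ψ hψ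
    · rw [gronwallBound_ε0] at hga
      have hψI : ψ ∈ Icc ψ' ψb := ⟨le_trans haI.1 hψ.1, hψ.2⟩
      have : ‖Φ ψ - φ0‖ = Φ ψ - φ0 :=
        Real.norm_of_nonneg (by linarith [(hΦr ψ hψI).1])
      rw [this] at hga
      exact hga
    · intro t ht
      have htI : t ∈ Ioc ψ' ψb := ⟨lt_of_lt_of_le ha.1 ht.1, ht.2.le⟩
      have h := (hΦd t htI).sub_const φ0
      apply h.mono_of_mem_nhdsWithin
      rw [mem_nhdsWithin]
      exact ⟨Ioo ψ' ψb, isOpen_Ioo, ⟨htI.1, ht.2⟩,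
        fun u hu => ⟨hu.1.1.le, hu.1.2.le⟩⟩
    · intro t ht
      have htIcc : t ∈ Icc ψ' ψb := ⟨(lt_of_lt_of_le ha.1 ht.1).le, ht.2.le⟩
      have hpS : (Φ t, t) ∈ S := ⟨hΦr t htIcc, ⟨le_trans hψ'.1 htIcc.1, htIcc.2⟩⟩
      have hb := hbeta (Φ t, t) hpS
      rw [Real.norm_of_nonneg (Real.sqrt_nonneg _),
        Real.norm_of_nonneg (sub_nonneg.2 (hΦr t htIcc).1), add_zero]
      exact hb
  -- conclusion
  intro ψ hψ
  rcases eq_or_lt_of_le hψ.1 with he | hlt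
  · rw [← he]; exact hΦ0
  · have hge : φ0 ≤ Φ ψ := (hΦr ψ hψ).1
    have hle : Φ ψ - φ0 ≤ 0 := by
      haveI hne : (nhdsWithin ψ' (Ioo ψ' ψ)).NeBot := by
        rw [← mem_closure_iff_nhdsWithin_neBot, closure_Ioo (ne_of_lt hlt)]
        exact ⟨le_rfl, hlt.le⟩
      have hev : ∀ᶠ a in nhdsWithin ψ' (Ioo ψ' ψ),
          Φ ψ - φ0 ≤ (Φ a - φ0) * Real.exp (C * (ψ - a)) := by
        filter_upwards [self_mem_nhdsWithin] with a ha
        exact main a ⟨ha.1, lt_of_lt_of_le ha.2 hψ.2⟩ ψ ⟨ha.2.le, hψ.2⟩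
      have hsub : Ioo ψ' ψ ⊆ Icc ψ' ψb :=
        fun u hu => ⟨hu.1.le, le_trans hu.2.le hψ.2⟩
      have h1 : Tendsto Φ (nhdsWithin ψ' (Ioo ψ' ψ)) (nhds (Φ ψ')) :=
        ((hΦc ψ' ⟨le_rfl, le_trans hlt.le hψ.2⟩).tendsto).mono_left
          (nhdsWithin_mono _ hsub)
      have h2 : Tendsto (fun a => Real.exp (C * (ψ - a)))
          (nhdsWithin ψ' (Ioo ψ' ψ)) (nhds (Real.exp (C * (ψ - ψ')))) := by
        apply Tendsto.mono_left _ nhdsWithin_le_nhds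
        exact (Real.continuous_exp.comp (continuous_const.mul
          (continuous_const.sub continuous_id))).tendsto ψ'
      have h3 : Tendsto (fun a => (Φ a - φ0) * Real.exp (C * (ψ - a)))
          (nhdsWithin ψ' (Ioo ψ' ψ)) (nhds 0) := by
        have := (h1.sub (tendsto_const_nhds (x := φ0))).mul h2
        rw [hΦ0, sub_self, zero_mul] at this
        exact this
      exact ge_of_tendsto h3 hev
    linarith
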